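/- Let (A; ∧, d) be a finite SMB algebra over ~. Define x∧₁y := (x∧y)∧y and d₁(x,y,z) := d((y∧₁z)∧₁x, (x∧₁z)∧₁y, (x∧₁y)∧₁z). Then define x∧'y to be the result of applying the map z ↦ z∧₁y to x exactly |A|! times (i.e. ((…((x∧₁y)∧₁y)…)∧₁y) with |A|! occurrences of ∧₁), and define d'(x,y,z) := d₁((y∧'z)∧'x, (x∧'z)∧'y, (x∧'y)∧'z). Then (A; ∧', d') is a regular SMB algebra over the same congruence ~, and d'(a,b,c) = d(a,b,c) whenever a ~ b and b ~ c. -/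

import Mathlib

/-- An equivalence relation on `A` compatible with the binary operation `m`
and the ternary operation `d`, i.e. a congruence of the algebra `(A; m, d)`. -/
structure IsCongruence {A : Type*} (m : A → A → A) (d : A → A → A → A)
    (θ : A → A → Prop) : Prop where
  equiv : Equivalence θ
  compat_m : ∀ {a a' b b'}, θ a a' → θ b b' → θ (m a b) (m a' b')
  compat_d : ∀ {a a' b b' c c'}, θ a a' → θ b b' → θ c c' → θ (d a b c) (d a' b' c')

/-- `(A; m, d)` is an SMB algebra over the congruence `r`. -/
structure IsSMB {A : Type*} (m : A → A → A) (d : A → A → A → A)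
    (r : A → A → Prop) : Prop where
  cong : IsCongruence m d r
  idem_m : ∀ x, m x x = x
  idem_d : ∀ x, d x x x = x
  comm : ∀ x y, r (m x y) (m y x)
  assoc : ∀ x y z, r (m (m x y) z) (m x (m y z))
  proj : ∀ a b, r a b → m a b = b
  mal_left : ∀ a b, r a b → d a b b = a
  mal_right : ∀ a b, r a b → d b b a = a

/-- `(A; m, d)` is a regular SMB algebra over the congruence `r`. -/
structure IsRegularSMB {A : Type*} (m : A → A → A) (d : A → A → A → A)
    (r : A → A → Prop) : Prop where
  smb : IsSMB m d r
  reg1 : ∀ a b c, r (d a b c) (m (m a b) c)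
  reg2 : ∀ a b, r (m a b) b → m a b = b
  reg3 : ∀ x y z, d x y z = d (m (m y z) x) (m (m x z) y) (m (m x y) z)
  reg4 : ∀ x y, m (m x y) y = m x y

/-- The principal congruence generated by the pair `(a, b)`: the smallest
congruence of `(A; m, d)` containing `(a, b)`. -/
def Cg {A : Type*} (m : A → A → A) (d : A → A → A → A) (a b : A) : A → A → Prop :=
  fun x y => ∀ θ : A → A → Prop, IsCongruence m d θ → θ a b → θ x y

/-- The join of two congruences: the smallest congruence of `(A; m, d)`
containing both `ρ` and `σ`. -/
def congJoin {A : Type*} (m : A → A → A) (d : A → A → A → A)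
    (ρ σ : A → A → Prop) : A → A → Prop :=
  fun x y => ∀ θ : A → A → Prop, IsCongruence m d θ →
    (∀ u v, ρ u v → θ u v) → (∀ u v, σ u v → θ u v) → θ x y

/-- The derived binary operation `x ∧₁ y := (x∧y)∧y`. -/
def smbMeet1 {A : Type*} (m : A → A → A) (x y : A) : A := m (m x y) y

/-- The derived ternary operation
`d₁(x,y,z) := d((y∧₁z)∧₁x, (x∧₁z)∧₁y, (x∧₁y)∧₁z)`. -/
def smbD1 {A : Type*} (m : A → A → A) (d : A → A → A → A) (x y z : A) : A :=
  d (smbMeet1 m (smbMeet1 m y z) x) (smbMeet1 m (smbMeet1 m x z) y)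
    (smbMeet1 m (smbMeet1 m x y) z)

/-- The derived binary operation `x ∧' y`: apply `z ↦ z ∧₁ y` to `x`
exactly `|A|!` times. -/
def smbMeet' {A : Type*} [Fintype A] (m : A → A → A) (x y : A) : A :=
  (fun z => smbMeet1 m z y)^[(Fintype.card A).factorial] x

/-- The derived ternary operation
`d'(x,y,z) := d₁((y∧'z)∧'x, (x∧'z)∧'y, (x∧'y)∧'z)`. -/
def smbD' {A : Type*} [Fintype A] (m : A → A → A) (d : A → A → A → A)
    (x y z : A) : A :=
  smbD1 m d (smbMeet' m (smbMeet' m y z) x) (smbMeet' m (smbMeet' m x z) y)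
    (smbMeet' m (smbMeet' m x y) z)


section SMBAux

variable {A : Type*} {m : A → A → A} {d : A → A → A → A} {r : A → A → Prop}

lemma smb_meet1_r (h : IsSMB m d r) (x y : A) : r (smbMeet1 m x y) (m x y) := by
  have hx := h.assoc x y y
  rwa [h.idem_m y] at hx

lemma smb_meet_rot (h : IsSMB m d r) (x y z : A) :
    r (m (m x y) z) (m (m y z) x) :=
  h.cong.equiv.trans (h.assoc x y z) (h.comm x (m y z))

lemma smb_meet_swap (h : IsSMB m d r) (x y z : A) :
    r (m (m x y) z) (m (m y x) z) :=
  h.cong.compat_m (h.comm x y) (h.cong.equiv.refl z)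

lemma smb_iter_meet1_r (h : IsSMB m d r) (x y : A) :
    ∀ k, r ((fun z => smbMeet1 m z y)^[k + 1] x) (m x y) := by
  intro k
  induction k with
  | zero => simpa using smb_meet1_r h x y
  | succ k ih =>
    rw [Function.iterate_succ_apply']
    refine h.cong.equiv.trans (smb_meet1_r h _ y) ?_
    refine h.cong.equiv.trans (h.cong.compat_m ih (h.cong.equiv.refl y)) ?_
    exact smb_meet1_r h x y

lemma smb_meet'_r [Fintype A] (h : IsSMB m d r) (x y : A) :
    r (smbMeet' m x y) (m x y) := by
  have hpos := Nat.factorial_pos (Fintype.card A)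
  obtain ⟨k, hk⟩ : ∃ k, (Fintype.card A).factorial = k + 1 :=
    ⟨(Fintype.card A).factorial - 1, by omega⟩
  rw [smbMeet', hk]
  exact smb_iter_meet1_r h x y k

lemma smb_iter_fix (h : IsSMB m d r) (b : A) :
    ∀ k, (fun z => smbMeet1 m z b)^[k] b = b := by
  intro k
  induction k with
  | zero => rfl
  | succ k ih =>
    rw [Function.iterate_succ_apply', ih]
    show m (m b b) b = b
    rw [h.idem_m, h.idem_m]

lemma smb_meet'_proj [Fintype A] (h : IsSMB m d r) {a b : A} (hab : r a b) :
    smbMeet' m a b = b := by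
  have hfa : smbMeet1 m a b = b := by
    show m (m a b) b = b
    rw [h.proj a b hab, h.idem_m]
  have hpos := Nat.factorial_pos (Fintype.card A)
  obtain ⟨k, hk⟩ : ∃ k, (Fintype.card A).factorial = k + 1 :=
    ⟨(Fintype.card A).factorial - 1, by omega⟩
  rw [smbMeet', hk, Function.iterate_succ_apply, hfa, smb_iter_fix h b k]

lemma smb_meet1_compat (h : IsSMB m d r) {a a' b b' : A} (ha : r a a') (hb : r b b') :
    r (smbMeet1 m a b) (smbMeet1 m a' b') :=
  h.cong.compat_m (h.cong.compat_m ha hb) hb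

lemma smb_meet'_compat [Fintype A] (h : IsSMB m d r) {a a' b b' : A}
    (ha : r a a') (hb : r b b') : r (smbMeet' m a b) (smbMeet' m a' b') := by
  have key : ∀ k, r ((fun z => smbMeet1 m z b)^[k] a) ((fun z => smbMeet1 m z b')^[k] a') := by
    intro k
    induction k with
    | zero => exact ha
    | succ k ih =>
      rw [Function.iterate_succ_apply', Function.iterate_succ_apply']
      exact smb_meet1_compat h ih hb
  exact key _

lemma smb_meet'_class [Fintype A] (h : IsSMB m d r) (x y z : A) :
    r (smbMeet' m (smbMeet' m x y) z) (m (m x y) z) :=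
  h.cong.equiv.trans (smb_meet'_r h _ z)
    (h.cong.compat_m (smb_meet'_r h x y) (h.cong.equiv.refl z))

lemma smb_triple_rel [Fintype A] (h : IsSMB m d r) (x y z : A) :
    r (smbMeet' m (smbMeet' m y z) x) (smbMeet' m (smbMeet' m x y) z) ∧
    r (smbMeet' m (smbMeet' m x z) y) (smbMeet' m (smbMeet' m x y) z) := by
  have e := h.cong.equiv
  have hX := smb_meet'_class h y z x
  have hY := smb_meet'_class h x z y
  have hZ := smb_meet'_class h x y z
  constructor
  · refine e.trans hX (e.trans ?_ (e.symm hZ))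
    exact e.trans (smb_meet_rot h y z x) (smb_meet_rot h z x y)
  · refine e.trans hY (e.trans ?_ (e.symm hZ))
    exact e.trans (smb_meet_swap h x z y) (smb_meet_rot h z x y)

lemma smb_d'_eq [Fintype A] (h : IsSMB m d r) (x y z : A) :
    smbD' m d x y z =
      d (smbMeet' m (smbMeet' m y z) x) (smbMeet' m (smbMeet' m x z) y)
        (smbMeet' m (smbMeet' m x y) z) := by
  have e := h.cong.equiv
  obtain ⟨hXZ, hYZ⟩ := smb_triple_rel h x y z
  set X := smbMeet' m (smbMeet' m y z) x with hXdef
  set Y := smbMeet' m (smbMeet' m x z) y with hYdef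
  set Z := smbMeet' m (smbMeet' m x y) z with hZdef
  have hZX : r Z X := e.symm hXZ
  have hXY : r X Y := e.trans hXZ (e.symm hYZ)
  have red : ∀ a b c : A, r a b → r b c → smbMeet1 m (smbMeet1 m a b) c = c := by
    intro a b c hab hbc
    have h1 : smbMeet1 m a b = b := by
      show m (m a b) b = b
      rw [h.proj a b hab, h.idem_m]
    rw [h1]
    show m (m b c) c = c
    rw [h.proj b c hbc, h.idem_m]
  show smbD1 m d X Y Z = d X Y Z
  unfold smbD1
  rw [red Y Z X hYZ hZX, red X Z Y hXZ (e.symm hYZ), red X Y Z hXY hYZ]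

lemma smb_d'_restrict [Fintype A] (h : IsSMB m d r) {a b c : A}
    (hab : r a b) (hbc : r b c) : smbD' m d a b c = d a b c := by
  have e := h.cong.equiv
  rw [smb_d'_eq h a b c, smb_meet'_proj h hbc, smb_meet'_proj h (e.trans hab hbc),
    smb_meet'_proj h hab, smb_meet'_proj h (e.symm (e.trans hab hbc)),
    smb_meet'_proj h (e.symm hbc), smb_meet'_proj h hbc]

end SMBAux

lemma smb_iterate_factorial_idem {A : Type*} [Fintype A] (f : A → A) (x : A) :
    f^[(Fintype.card A).factorial] (f^[(Fintype.card A).factorial] x)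
      = f^[(Fintype.card A).factorial] x := by
  set n := Fintype.card A with hn
  have key : ∀ i j : ℕ, i < j → j ≤ n → f^[i] x = f^[j] x →
      f^[n.factorial] (f^[n.factorial] x) = f^[n.factorial] x := by
    intro i j hlt hle heq
    set p := j - i with hp
    have hppos : 0 < p := by omega
    have hpdvd : p ∣ n.factorial := Nat.dvd_factorial hppos (by omega)
    have step : ∀ s, i ≤ s → f^[s + p] x = f^[s] x := by
      intro s hs
      have h1 : s + p = (s - i) + j := by omega
      have h2 : (s - i) + i = s := by omega
      rw [h1, Function.iterate_add_apply, ← heq, ← Function.iterate_add_apply, h2]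
    have steps : ∀ k s, i ≤ s → f^[s + k * p] x = f^[s] x := by
      intro k
      induction k with
      | zero => intro s _; simp
      | succ k ih =>
        intro s hs
        have hrw : s + (k + 1) * p = (s + p) + k * p := by ring
        rw [hrw, ih (s + p) (by omega), step s hs]
    have hif : i ≤ n.factorial := le_trans (by omega) (Nat.self_le_factorial n)
    obtain ⟨c, hc⟩ := hpdvd
    have harith : n.factorial + n.factorial = n.factorial + c * p := by
      rw [hc]; ring
    calc f^[n.factorial] (f^[n.factorial] x) = f^[n.factorial + n.factorial] x := by
          rw [Function.iterate_add_apply]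
      _ = f^[n.factorial + c * p] x := by rw [harith]
      _ = f^[n.factorial] x := steps c _ hif
  obtain ⟨i, j, hij, hfij⟩ :=
    Fintype.exists_ne_map_eq_of_card_lt (fun i : Fin (n + 1) => f^[(i : ℕ)] x)
      (by simp; omega)
  have hij' : (i : ℕ) ≠ (j : ℕ) := fun hc => hij (Fin.ext hc)
  rcases Nat.lt_or_ge (i : ℕ) (j : ℕ) with hlt | hge
  · exact key i j hlt (by omega) hfij
  · have hlt : (j : ℕ) < i := by omega
    exact key j i hlt (by omega) hfij.symm


/-- For any finite SMB algebra `(A; ∧, d)` over `~`, the algebra `(A; ∧', d')`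
is a regular SMB algebra over the same congruence `~`, and `d'` agrees with `d`
on triples lying in a single `~`-class. -/
theorem finite_smb_to_regular {A : Type*} [Fintype A] (m : A → A → A)
    (d : A → A → A → A) (r : A → A → Prop) (h : IsSMB m d r) :
    IsRegularSMB (smbMeet' m) (smbD' m d) r ∧
    (∀ a b c : A, r a b → r b c → smbD' m d a b c = d a b c) := by
  have e := h.cong.equiv
  have cong' : IsCongruence (smbMeet' m) (smbD' m d) r := by
    refine ⟨e, ?_, ?_⟩
    · intro a a' b b' ha hb
      exact smb_meet'_compat h ha hb
    · intro a a' b b' c c' ha hb hc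
      rw [smb_d'_eq h a b c, smb_d'_eq h a' b' c']
      exact h.cong.compat_d
        (smb_meet'_compat h (smb_meet'_compat h hb hc) ha)
        (smb_meet'_compat h (smb_meet'_compat h ha hc) hb)
        (smb_meet'_compat h (smb_meet'_compat h ha hb) hc)
  have smb' : IsSMB (smbMeet' m) (smbD' m d) r := by
    refine ⟨cong', ?_, ?_, ?_, ?_, ?_, ?_, ?_⟩
    · intro x
      exact smb_meet'_proj h (e.refl x)
    · intro x
      rw [smb_d'_restrict h (e.refl x) (e.refl x)]
      exact h.idem_d x
    · intro x y
      exact e.trans (smb_meet'_r h x y) (e.trans (h.comm x y) (e.symm (smb_meet'_r h y x)))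
    · intro x y z
      refine e.trans (smb_meet'_r h _ z)
        (e.trans (h.cong.compat_m (smb_meet'_r h x y) (e.refl z)) ?_)
      refine e.trans (h.assoc x y z) ?_
      refine e.trans (h.cong.compat_m (e.refl x) (e.symm (smb_meet'_r h y z))) ?_
      exact e.symm (smb_meet'_r h x _)
    · intro a b hab
      exact smb_meet'_proj h hab
    · intro a b hab
      rw [smb_d'_restrict h hab (e.refl b)]
      exact h.mal_left a b hab
    · intro a b hab
      rw [smb_d'_restrict h (e.refl b) (e.symm hab)]
      exact h.mal_right a b hab
  refine ⟨⟨smb', ?_, ?_, ?_, ?_⟩, fun a b c hab hbc => smb_d'_restrict h hab hbc⟩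
  · -- reg1
    intro a b c
    rw [smb_d'_eq h a b c]
    obtain ⟨hXZ, hYZ⟩ := smb_triple_rel h a b c
    have h1 := h.cong.compat_d (e.refl (smbMeet' m (smbMeet' m b c) a))
      (e.symm (e.trans hXZ (e.symm hYZ))) (e.symm hXZ)
    rw [h.idem_d] at h1
    exact e.trans h1 hXZ
  · -- reg2
    intro a b hmb
    have hfix : smbMeet1 m (smbMeet' m a b) b = b := by
      show m (m (smbMeet' m a b) b) b = b
      rw [h.proj _ b hmb, h.idem_m]
    have hidem := smb_iterate_factorial_idem (fun z => smbMeet1 m z b) a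
    have hpos := Nat.factorial_pos (Fintype.card A)
    obtain ⟨k, hk⟩ : ∃ k, (Fintype.card A).factorial = k + 1 :=
      ⟨(Fintype.card A).factorial - 1, by omega⟩
    have h2 : smbMeet' m a b
        = (fun z => smbMeet1 m z b)^[(Fintype.card A).factorial] (smbMeet' m a b) :=
      hidem.symm
    rw [h2, hk, Function.iterate_succ_apply, hfix, smb_iter_fix h b k]
  · -- reg3
    intro x y z
    obtain ⟨hXZ, hYZ⟩ := smb_triple_rel h x y z
    have hXY := e.trans hXZ (e.symm hYZ)
    rw [smb_d'_eq h x y z, smb_d'_eq h _ _ _,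
      smb_meet'_proj h hYZ, smb_meet'_proj h (e.symm hXZ), smb_meet'_proj h hXZ,
      smb_meet'_proj h (e.symm hYZ), smb_meet'_proj h hXY, smb_meet'_proj h hYZ]
  · -- reg4
    intro x y
    exact smb_iterate_factorial_idem (fun z => smbMeet1 m z y) x
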